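/- For every subset F ⊆ E, the number of subgraphs K ∈ S_f with A(K) = F equals the number of orientations L ∈ O_f with A(L) = F; that is, the count of subgraphs and of orientations is equal even when refined according to their min-cost d-flow. -/

import Mathlib

open Finset

section Defs

variable {V : Type*}

/-- Reversal of a directed edge. -/
def drev (e : V × V) : V × V := (e.2, e.1)

/-- `K` is a subgraph of the (symmetric) edge set `E`: it contains either both or
neither of `e` and `drev e` for every `e ∈ E`. -/
def IsSubgraph [DecidableEq V] (E K : Finset (V × V)) : Prop :=
  K ⊆ E ∧ ∀ e ∈ E, (e ∈ K ↔ drev e ∈ K)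

/-- `L` is an orientation of the (symmetric) edge set `E`: it contains exactly one of
`e` and `drev e` for every `e ∈ E`. -/
def IsOrientation [DecidableEq V] (E L : Finset (V × V)) : Prop :=
  L ⊆ E ∧ ∀ e ∈ E, (e ∈ L ↔ drev e ∉ L)

variable [Fintype V] [DecidableEq V]

/-- `f` is a `d`-flow on the directed subgraph `D` of the graph with edge set `E`. -/
def IsFlow (E D : Finset (V × V)) (d : V → ℤ) (f : V × V → ℝ) : Prop :=
  (∀ e ∈ E, 0 ≤ f e ∧ f e ≤ 1) ∧
  (∀ e, e ∉ D → f e = 0) ∧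
  ∀ u : V,
    ((Finset.univ.filter (fun v : V => (u, v) ∈ E)).sum fun v => f (u, v)) -
      ((Finset.univ.filter (fun v : V => (v, u) ∈ E)).sum fun v => f (v, u)) = (d u : ℝ)

/-- A `d`-flow exists on `D`. -/
def AdmitsFlow (E D : Finset (V × V)) (d : V → ℤ) : Prop :=
  ∃ f : V × V → ℝ, IsFlow E D d f

/-- The `w`-cost of a flow `f`. -/
def flowCost (E : Finset (V × V)) (w : V × V → ℝ) (f : V × V → ℝ) : ℝ :=
  ∑ e ∈ E, w e * f e

/-- `f` is a min-cost `d`-flow on `D`. -/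
def IsMinCostFlow (E D : Finset (V × V)) (d : V → ℤ) (w : V × V → ℝ)
    (f : V × V → ℝ) : Prop :=
  IsFlow E D d f ∧ ∀ g : V × V → ℝ, IsFlow E D d g → flowCost E w f ≤ flowCost E w g

/-- The `{0,1}`-valued function determined by a set of edges. -/
def ind (S : Finset (V × V)) : V × V → ℝ := fun e => if e ∈ S then 1 else 0

/-- `A` assigns to every flow-admitting `D ⊆ E` the (edge set of the) unique,
`{0,1}`-valued min-cost `d`-flow on `D`. -/
def GoodA (E : Finset (V × V)) (d : V → ℤ) (w : V × V → ℝ)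
    (A : Finset (V × V) → Finset (V × V)) : Prop :=
  ∀ D : Finset (V × V), D ⊆ E → AdmitsFlow E D d →
    IsMinCostFlow E D d w (ind (A D)) ∧
    ∀ f : V × V → ℝ, IsMinCostFlow E D d w f → f = ind (A D)

/-- `A(D) = A(D')`: both `D` and `D'` admit a `d`-flow and their unique min-cost
`d`-flows coincide.  (If one of them admits no `d`-flow this is false.) -/
def AEq (E : Finset (V × V)) (d : V → ℤ) (A : Finset (V × V) → Finset (V × V))
    (D D' : Finset (V × V)) : Prop :=
  AdmitsFlow E D d ∧ AdmitsFlow E D' d ∧ A D = A D'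

/-- `D ⊕ e := (D ∪ {e}) \ {drev e}`. -/
def oplus (D : Finset (V × V)) (e : V × V) : Finset (V × V) := insert e D \ {drev e}

/-- `D + e := D ∪ {e, drev e}`. -/
def padd (D : Finset (V × V)) (e : V × V) : Finset (V × V) := D ∪ {e, drev e}

/-- `D − e := D \ {e, drev e}`. -/
def psub (D : Finset (V × V)) (e : V × V) : Finset (V × V) := D \ {e, drev e}

/-- The representative of `{e, drev e}` lying in the reference orientation `E'`. -/
def chi (E' : Finset (V × V)) (e : V × V) : V × V := if e ∈ E' then e else drev e

/-- The map `φ_e`. -/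
noncomputable def phiE (E : Finset (V × V)) (d : V → ℤ)
    (A : Finset (V × V) → Finset (V × V)) (E' : Finset (V × V))
    (e : V × V) (D : Finset (V × V)) : Finset (V × V) := by
  classical
  exact
    if ¬ AEq E d A D (oplus D e) then oplus D (drev e)
    else if ¬ AEq E d A D (oplus D (drev e)) then oplus D e
    else if e ∈ D then oplus D (chi E' e) else oplus D (drev (chi E' e))

/-- The map `ψ_e`. -/
noncomputable def psiE (E : Finset (V × V)) (d : V → ℤ)
    (A : Finset (V × V) → Finset (V × V)) (E' : Finset (V × V))
    (e : V × V) (D : Finset (V × V)) : Finset (V × V) := by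
  classical
  exact
    if ¬ AEq E d A D (padd D e) then psub D e
    else if ¬ AEq E d A D (psub D e) then padd D e
    else if chi E' e ∈ D then padd D e else psub D e

end Defs

section Aux

open Finset

attribute [local instance] Classical.propDecidable

set_option linter.unusedSectionVars false

variable {V : Type*} [Fintype V] [DecidableEq V]

@[simp] lemma drev_drev (e : V × V) : drev (drev e) = e := rfl

lemma drev_fst (e : V × V) : (drev e).1 = e.2 := rfl
lemma drev_snd (e : V × V) : (drev e).2 = e.1 := rfl

lemma ne_drev {e : V × V} (h : e.1 ≠ e.2) : e ≠ drev e :=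
  fun hc => h (congrArg Prod.fst hc)

/-- Divergence of `f` at `u`. -/
def divg (E : Finset (V × V)) (f : V × V → ℝ) (u : V) : ℝ :=
  ((Finset.univ.filter (fun v : V => (u, v) ∈ E)).sum fun v => f (u, v)) -
    ((Finset.univ.filter (fun v : V => (v, u) ∈ E)).sum fun v => f (v, u))

lemma isFlow_iff (E D : Finset (V × V)) (d : V → ℤ) (f : V × V → ℝ) :
    IsFlow E D d f ↔ (∀ e ∈ E, 0 ≤ f e ∧ f e ≤ 1) ∧ (∀ e, e ∉ D → f e = 0) ∧
      ∀ u : V, divg E f u = (d u : ℝ) := Iff.rfl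

lemma divg_addMul (E : Finset (V × V)) (f g : V × V → ℝ) (c : ℝ) (u : V) :
    divg E (fun x => f x + c * g x) u = divg E f u + c * divg E g u := by
  simp only [divg, Finset.sum_add_distrib, ← Finset.mul_sum]
  ring

lemma divg_smul (E : Finset (V × V)) (f : V × V → ℝ) (c : ℝ) (u : V) :
    divg E (fun x => c * f x) u = c * divg E f u := by
  simp only [divg, ← Finset.mul_sum]
  ring

lemma divg_add (E : Finset (V × V)) (f g : V × V → ℝ) (u : V) :
    divg E (fun x => f x + g x) u = divg E f u + divg E g u := by
  simp only [divg, Finset.sum_add_distrib]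
  ring

lemma divg_single (E : Finset (V × V)) (x : V × V) (hx : x ∈ E) (u : V) :
    divg E (fun y => if y = x then (1:ℝ) else 0) u
      = (if u = x.1 then 1 else 0) - (if u = x.2 then 1 else 0) := by
  obtain ⟨a, b⟩ := x
  have h1 : ((Finset.univ.filter (fun v : V => (u, v) ∈ E)).sum
      fun v => if (u, v) = (a, b) then (1:ℝ) else 0) = if u = a then 1 else 0 := by
    rw [Finset.sum_filter]
    have hterm : ∀ v : V, (if (u, v) ∈ E then (if (u, v) = (a, b) then (1:ℝ) else 0) else 0)
        = if u = a then (if v = b then 1 else 0) else 0 := by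
      intro v
      by_cases hu : u = a
      · by_cases hv : v = b
        · subst hu; subst hv; simp [hx]
        · simp [hu, hv, Prod.ext_iff]
      · simp [hu, Prod.ext_iff]
    simp only [hterm]
    by_cases hu : u = a <;> simp [hu]
  have h2 : ((Finset.univ.filter (fun v : V => (v, u) ∈ E)).sum
      fun v => if (v, u) = (a, b) then (1:ℝ) else 0) = if u = b then 1 else 0 := by
    rw [Finset.sum_filter]
    have hterm : ∀ v : V, (if (v, u) ∈ E then (if (v, u) = (a, b) then (1:ℝ) else 0) else 0)
        = if u = b then (if v = a then 1 else 0) else 0 := by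
      intro v
      by_cases hu : u = b
      · by_cases hv : v = a
        · subst hu; subst hv; simp [hx]
        · simp [hu, hv, Prod.ext_iff]
      · simp [hu, Prod.ext_iff]
    simp only [hterm]
    by_cases hu : u = b <;> simp [hu]
  simpa [divg] using congrArg₂ (· - ·) h1 h2

lemma flowCost_addMul (E : Finset (V × V)) (w f g : V × V → ℝ) (c : ℝ) :
    flowCost E w (fun x => f x + c * g x) = flowCost E w f + c * flowCost E w g := by
  have h : ∀ x, w x * (f x + c * g x) = w x * f x + c * (w x * g x) := by
    intro x; ring
  simp only [flowCost, h, Finset.sum_add_distrib, ← Finset.mul_sum]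

lemma flowCost_smul (E : Finset (V × V)) (w f : V × V → ℝ) (c : ℝ) :
    flowCost E w (fun x => c * f x) = c * flowCost E w f := by
  have h : ∀ x, w x * (c * f x) = c * (w x * f x) := by intro x; ring
  simp only [flowCost, h, ← Finset.mul_sum]

lemma flowCost_add (E : Finset (V × V)) (w f g : V × V → ℝ) :
    flowCost E w (fun x => f x + g x) = flowCost E w f + flowCost E w g := by
  simp only [flowCost, mul_add, Finset.sum_add_distrib]

lemma flowCost_single (E : Finset (V × V)) (w : V × V → ℝ) (x : V × V) (hx : x ∈ E) :
    flowCost E w (fun y => if y = x then (1:ℝ) else 0) = w x := by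
  simp only [flowCost, mul_ite, mul_one, mul_zero, Finset.sum_ite_eq', hx, if_pos]

lemma IsFlow.restrict {E D D' : Finset (V × V)} {d : V → ℤ} {f : V × V → ℝ}
    (hf : IsFlow E D d f) (h : ∀ x, x ∉ D' → f x = 0) : IsFlow E D' d f :=
  ⟨hf.1, h, hf.2.2⟩

lemma IsFlow.mono {E D D' : Finset (V × V)} {d : V → ℤ} {f : V × V → ℝ}
    (hf : IsFlow E D d f) (h : D ⊆ D') : IsFlow E D' d f :=
  hf.restrict (fun x hx => hf.2.1 x (fun hxD => hx (h hxD)))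

lemma AdmitsFlow.mono {E D D' : Finset (V × V)} {d : V → ℤ}
    (h : AdmitsFlow E D d) (hDD' : D ⊆ D') : AdmitsFlow E D' d := by
  obtain ⟨f, hf⟩ := h
  exact ⟨f, hf.mono hDD'⟩

lemma ind_inj {S S' : Finset (V × V)} (h : ind S = ind S') : S = S' := by
  ext x
  have hx := congrFun h x
  by_cases h1 : x ∈ S <;> by_cases h2 : x ∈ S' <;>
    simp [ind, h1, h2] at hx ⊢

section WithA

variable {E : Finset (V × V)} {d : V → ℤ} {w : V × V → ℝ}
variable {A : Finset (V × V) → Finset (V × V)}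

lemma A_subset (hA : GoodA E d w A) {D : Finset (V × V)} (hD : D ⊆ E)
    (h : AdmitsFlow E D d) : A D ⊆ D := by
  intro x hx
  by_contra hxD
  have h0 := (hA D hD h).1.1.2.1 x hxD
  simp [ind, hx] at h0

lemma A_eq_up (hA : GoodA E d w A) {X Y : Finset (V × V)} (hXY : X ⊆ Y) (hYE : Y ⊆ E)
    (hX : AdmitsFlow E X d) (hY : AdmitsFlow E Y d) (hsub : A Y ⊆ X) : A X = A Y := by
  have hXE : X ⊆ E := hXY.trans hYE
  have hminY := (hA Y hYE hY).1
  have hflowX : IsFlow E X d (ind (A Y)) := by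
    refine hminY.1.restrict ?_
    intro x hx
    have : x ∉ A Y := fun hxA => hx (hsub hxA)
    simp [ind, this]
  have hmin : IsMinCostFlow E X d w (ind (A Y)) :=
    ⟨hflowX, fun g hg => hminY.2 g (hg.mono hXY)⟩
  exact (ind_inj ((hA X hXE hX).2 _ hmin)).symm

lemma cancel_flow {D : Finset (V × V)} {f : V × V → ℝ}
    (e : V × V) (he : e ∈ E) (hee : drev e ∈ E) (hne : e ≠ drev e)
    (heD : e ∈ D) (heeD : drev e ∈ D) (hf : IsFlow E D d f) (w : V × V → ℝ) :
    ∃ g : V × V → ℝ, IsFlow E D d g ∧ (g e = 0 ∨ g (drev e) = 0) ∧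
      flowCost E w g = flowCost E w f - min (f e) (f (drev e)) * (w e + w (drev e)) := by
  have hfe := hf.1 e he
  have hfee := hf.1 (drev e) hee
  have hm0 : 0 ≤ min (f e) (f (drev e)) := le_min hfe.1 hfee.1
  have hme : min (f e) (f (drev e)) ≤ f e := min_le_left _ _
  have hmee : min (f e) (f (drev e)) ≤ f (drev e) := min_le_right _ _
  refine ⟨fun x => f x + (-(min (f e) (f (drev e)))) * (if x = e then 1 else 0)
      + (-(min (f e) (f (drev e)))) * (if x = drev e then 1 else 0), ⟨?_, ?_, ?_⟩, ?_, ?_⟩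
  · intro x hx
    by_cases hxe : x = e
    · subst hxe
      simp only [eq_self_iff_true, if_true, if_neg hne, mul_one, mul_zero, add_zero]
      constructor <;> linarith [hfe.2]
    · by_cases hxee : x = drev e
      · subst hxee
        simp only [if_neg hxe, eq_self_iff_true, if_true, mul_one, mul_zero, add_zero, zero_add]
        constructor <;> linarith [hfee.2]
      · simp only [if_neg hxe, if_neg hxee, mul_zero, add_zero]
        exact hf.1 x hx
  · intro x hx
    have hxe : x ≠ e := fun h => hx (h ▸ heD)
    have hxee : x ≠ drev e := fun h => hx (h ▸ heeD)
    simp only [if_neg hxe, if_neg hxee, mul_zero, add_zero]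
    exact hf.2.1 x hx
  · intro u
    have key : divg E (fun x => f x + (-(min (f e) (f (drev e)))) * (if x = e then 1 else 0)
        + (-(min (f e) (f (drev e)))) * (if x = drev e then 1 else 0)) u = (d u : ℝ) := by
      simp only [divg_addMul, divg_single E e he, divg_single E (drev e) hee,
        drev_fst, drev_snd]
      rw [((isFlow_iff E D d f).mp hf).2.2 u]
      split_ifs <;> simp_all <;> ring
    exact key
  · rcases min_cases (f e) (f (drev e)) with ⟨hmeq, _⟩ | ⟨hmeq, _⟩
    · left
      simp only [eq_self_iff_true, if_true, if_neg hne, mul_one, mul_zero, add_zero]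
      linarith
    · right
      simp only [if_neg (Ne.symm hne), eq_self_iff_true, if_true, mul_one, mul_zero,
        add_zero, zero_add]
      linarith
  · simp only [flowCost_addMul, flowCost_single E w e he, flowCost_single E w (drev e) hee]
    ring

lemma not_both_use (hA : GoodA E d w A) (hw : ∀ x ∈ E, 0 < w x)
    (e : V × V) (he : e ∈ E) (hee : drev e ∈ E) (hne : e ≠ drev e)
    {D₀ : Finset (V × V)} (hD₀ : D₀ ⊆ E) (heD₀ : e ∉ D₀) (heeD₀ : drev e ∉ D₀)
    (hDe : AdmitsFlow E (insert e D₀) d) (hDee : AdmitsFlow E (insert (drev e) D₀) d)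
    (h1 : e ∈ A (insert e D₀)) (h2 : drev e ∈ A (insert (drev e) D₀)) : False := by
  have hDeE : insert e D₀ ⊆ E := insert_subset he hD₀
  have hDeeE : insert (drev e) D₀ ⊆ E := insert_subset hee hD₀
  have hmin1 := (hA _ hDeE hDe).1
  have hmin2 := (hA _ hDeeE hDee).1
  have hf1e : ind (A (insert e D₀)) e = 1 := by simp [ind, h1]
  have hf2ee : ind (A (insert (drev e) D₀)) (drev e) = 1 := by simp [ind, h2]
  have hnotee : drev e ∉ A (insert e D₀) := by
    intro hc
    have hmem := A_subset hA hDeE hDe hc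
    rcases mem_insert.mp hmem with h | h
    · exact hne h.symm
    · exact heeD₀ h
  have hnote : e ∉ A (insert (drev e) D₀) := by
    intro hc
    have hmem := A_subset hA hDeeE hDee hc
    rcases mem_insert.mp hmem with h | h
    · exact hne h
    · exact heD₀ h
  have hf1ee : ind (A (insert e D₀)) (drev e) = 0 := by simp [ind, hnotee]
  have hf2e : ind (A (insert (drev e) D₀)) e = 0 := by simp [ind, hnote]
  set f1 := ind (A (insert e D₀))
  set f2 := ind (A (insert (drev e) D₀))
  have hgflow : IsFlow E D₀ d (fun x => (1/2 : ℝ) * (f1 x + f2 x)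
      + (-(1/2 : ℝ)) * (if x = e then 1 else 0)
      + (-(1/2 : ℝ)) * (if x = drev e then 1 else 0)) := by
    refine (isFlow_iff E D₀ d _).mpr ⟨?_, ?_, ?_⟩
    · intro x hx
      by_cases hxe : x = e
      · subst hxe
        simp only [eq_self_iff_true, if_true, if_neg hne, mul_one, mul_zero, add_zero]
        rw [hf1e, hf2e]
        norm_num
      · by_cases hxee : x = drev e
        · subst hxee
          simp only [if_neg hxe, eq_self_iff_true, if_true, mul_one, mul_zero, add_zero, zero_add]
          rw [hf1ee, hf2ee]
          norm_num
        · simp only [if_neg hxe, if_neg hxee, mul_zero, add_zero]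
          have b1 := hmin1.1.1 x hx
          have b2 := hmin2.1.1 x hx
          constructor
          · linarith [b1.1, b2.1]
          · linarith [b1.2, b2.2]
    · intro x hx
      by_cases hxe : x = e
      · subst hxe
        simp only [eq_self_iff_true, if_true, if_neg hne, mul_one, mul_zero, add_zero]
        rw [hf1e, hf2e]
        norm_num
      · by_cases hxee : x = drev e
        · subst hxee
          simp only [if_neg hxe, eq_self_iff_true, if_true, mul_one, mul_zero, add_zero, zero_add]
          rw [hf1ee, hf2ee]
          norm_num
        · have h1x : f1 x = 0 := hmin1.1.2.1 x (by
            intro hc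
            rcases mem_insert.mp hc with h | h
            · exact hxe h
            · exact hx h)
          have h2x : f2 x = 0 := hmin2.1.2.1 x (by
            intro hc
            rcases mem_insert.mp hc with h | h
            · exact hxee h
            · exact hx h)
          simp [if_neg hxe, if_neg hxee, h1x, h2x]
    · intro u
      have key : divg E (fun x => (1/2 : ℝ) * (f1 x + f2 x)
          + (-(1/2 : ℝ)) * (if x = e then 1 else 0)
          + (-(1/2 : ℝ)) * (if x = drev e then 1 else 0)) u = (d u : ℝ) := by
        have hd1 := ((isFlow_iff E _ d f1).mp hmin1.1).2.2 u
        have hd2 := ((isFlow_iff E _ d f2).mp hmin2.1).2.2 u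
        simp only [divg_addMul, divg_smul, divg_add, divg_single E e he,
          divg_single E (drev e) hee, drev_fst, drev_snd]
        rw [hd1, hd2]
        split_ifs <;> simp_all <;> ring
      exact key
  have hcost : flowCost E w (fun x => (1/2 : ℝ) * (f1 x + f2 x)
      + (-(1/2 : ℝ)) * (if x = e then 1 else 0)
      + (-(1/2 : ℝ)) * (if x = drev e then 1 else 0))
      = (1/2) * (flowCost E w f1 + flowCost E w f2) - (1/2) * w e - (1/2) * w (drev e) := by
    simp only [flowCost_addMul, flowCost_smul, flowCost_add,
      flowCost_single E w e he, flowCost_single E w (drev e) hee]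
    ring
  have hle1 := hmin1.2 _ (hgflow.mono (subset_insert e D₀))
  have hle2 := hmin2.2 _ (hgflow.mono (subset_insert (drev e) D₀))
  rw [hcost] at hle1 hle2
  have hwe := hw e he
  have hwee := hw (drev e) hee
  linarith

lemma flow_drop {D₀ : Finset (V × V)} {g : V × V → ℝ} (e : V × V)
    (hg : IsFlow E (insert e (insert (drev e) D₀)) d g) (h0 : g (drev e) = 0) :
    IsFlow E (insert e D₀) d g := by
  refine hg.restrict ?_
  intro x hx
  by_cases hxee : x = drev e
  · exact hxee ▸ h0
  · refine hg.2.1 x ?_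
    intro hc
    rcases Finset.mem_insert.mp hc with h | h
    · exact hx (h ▸ Finset.mem_insert_self e D₀)
    · rcases Finset.mem_insert.mp h with h' | h'
      · exact hxee h'
      · exact hx (Finset.mem_insert_of_mem h')

lemma flow_drop' {D₀ : Finset (V × V)} {g : V × V → ℝ} (e : V × V)
    (hg : IsFlow E (insert e (insert (drev e) D₀)) d g) (h0 : g e = 0) :
    IsFlow E (insert (drev e) D₀) d g := by
  refine hg.restrict ?_
  intro x hx
  by_cases hxe : x = e
  · exact hxe ▸ h0
  · refine hg.2.1 x ?_
    intro hc
    rcases Finset.mem_insert.mp hc with h | h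
    · exact hxe h
    · exact hx h

lemma admits_split (e : V × V) (he : e ∈ E) (hee : drev e ∈ E) (hne : e ≠ drev e)
    {D₀ : Finset (V × V)}
    (h : AdmitsFlow E (insert e (insert (drev e) D₀)) d) :
    AdmitsFlow E (insert e D₀) d ∨ AdmitsFlow E (insert (drev e) D₀) d := by
  obtain ⟨f, hf⟩ := h
  obtain ⟨g, hg, h0, -⟩ := cancel_flow e he hee hne (Finset.mem_insert_self _ _)
    (Finset.mem_insert_of_mem (Finset.mem_insert_self _ _)) hf (fun _ => 0)
  rcases h0 with h0 | h0
  · exact Or.inr ⟨g, flow_drop' e hg h0⟩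
  · exact Or.inl ⟨g, flow_drop e hg h0⟩

lemma A_both_eq (hA : GoodA E d w A) (hw : ∀ x ∈ E, 0 < w x)
    (e : V × V) (he : e ∈ E) (hee : drev e ∈ E) (hne : e ≠ drev e)
    {D₀ : Finset (V × V)} (hD₀ : D₀ ⊆ E)
    (hDe : AdmitsFlow E (insert e D₀) d) (hDee : AdmitsFlow E (insert (drev e) D₀) d)
    (hle : flowCost E w (ind (A (insert e D₀)))
      ≤ flowCost E w (ind (A (insert (drev e) D₀)))) :
    A (insert e (insert (drev e) D₀)) = A (insert e D₀) := by
  have hDeE : insert e D₀ ⊆ E := Finset.insert_subset he hD₀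
  have hDeeE : insert (drev e) D₀ ⊆ E := Finset.insert_subset hee hD₀
  have hDbE : insert e (insert (drev e) D₀) ⊆ E :=
    Finset.insert_subset he (Finset.insert_subset hee hD₀)
  have hDeDb : insert e D₀ ⊆ insert e (insert (drev e) D₀) :=
    Finset.insert_subset_insert _ (Finset.subset_insert _ _)
  have hDb : AdmitsFlow E (insert e (insert (drev e) D₀)) d := hDe.mono hDeDb
  have hminDe := (hA _ hDeE hDe).1
  have hminDee := (hA _ hDeeE hDee).1
  have hmin : IsMinCostFlow E (insert e (insert (drev e) D₀)) d w (ind (A (insert e D₀))) := by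
    refine ⟨hminDe.1.mono hDeDb, ?_⟩
    intro g hg
    obtain ⟨g', hg', h0, hcost⟩ := cancel_flow e he hee hne (Finset.mem_insert_self _ _)
      (Finset.mem_insert_of_mem (Finset.mem_insert_self _ _)) hg w
    have hc0 : 0 ≤ min (g e) (g (drev e)) * (w e + w (drev e)) := by
      have hwe := hw e he
      have hwee := hw _ hee
      exact mul_nonneg (le_min (hg.1 e he).1 (hg.1 _ hee).1) (by linarith)
    rcases h0 with h0 | h0
    · have hflow := flow_drop' e hg' h0
      have := hminDee.2 g' hflow
      linarith
    · have hflow := flow_drop e hg' h0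
      have := hminDe.2 g' hflow
      linarith
  exact (ind_inj ((hA _ hDbE hDb).2 _ hmin)).symm

lemma A_asym (hA : GoodA E d w A) (hw : ∀ x ∈ E, 0 < w x)
    (e : V × V) (he : e ∈ E) (hee : drev e ∈ E) (hne : e ≠ drev e)
    {D₀ : Finset (V × V)} (hD₀ : D₀ ⊆ E) (heD₀ : e ∉ D₀) (heeD₀ : drev e ∉ D₀)
    (hDe : AdmitsFlow E (insert e D₀) d) (hDee : ¬ AdmitsFlow E (insert (drev e) D₀) d) :
    AdmitsFlow E (insert e (insert (drev e) D₀)) d ∧ ¬ AdmitsFlow E D₀ d ∧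
      A (insert e (insert (drev e) D₀)) = A (insert e D₀) := by
  have hDeE : insert e D₀ ⊆ E := Finset.insert_subset he hD₀
  have hDbE : insert e (insert (drev e) D₀) ⊆ E :=
    Finset.insert_subset he (Finset.insert_subset hee hD₀)
  have hDeDb : insert e D₀ ⊆ insert e (insert (drev e) D₀) :=
    Finset.insert_subset_insert _ (Finset.subset_insert _ _)
  have hDb : AdmitsFlow E (insert e (insert (drev e) D₀)) d := hDe.mono hDeDb
  have hnD₀ : ¬ AdmitsFlow E D₀ d := fun h => hDee (h.mono (Finset.subset_insert _ _))
  have hminDb := (hA _ hDbE hDb).1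
  have hnotee : drev e ∉ A (insert e (insert (drev e) D₀)) := by
    intro hc
    by_cases he' : e ∈ A (insert e (insert (drev e) D₀))
    · obtain ⟨g, hg, h0, hcost⟩ := cancel_flow e he hee hne (Finset.mem_insert_self _ _)
        (Finset.mem_insert_of_mem (Finset.mem_insert_self _ _)) hminDb.1 w
      have h1 : ind (A (insert e (insert (drev e) D₀))) e = 1 := by simp [ind, he']
      have h2 : ind (A (insert e (insert (drev e) D₀))) (drev e) = 1 := by simp [ind, hc]
      have hle := hminDb.2 g hg
      rw [hcost, h1, h2] at hle
      simp only [min_self] at hle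
      have hwe := hw e he
      have hwee := hw _ hee
      linarith
    · have hflow : IsFlow E (insert (drev e) D₀) d
          (ind (A (insert e (insert (drev e) D₀)))) := by
        refine hminDb.1.restrict ?_
        intro x hx
        by_cases hxA : x ∈ A (insert e (insert (drev e) D₀))
        · exfalso
          have hmem := A_subset hA hDbE hDb hxA
          rcases Finset.mem_insert.mp hmem with h | h
          · exact he' (h ▸ hxA)
          · exact hx h
        · simp [ind, hxA]
      exact hDee ⟨_, hflow⟩
  have hsub : A (insert e (insert (drev e) D₀)) ⊆ insert e D₀ := by
    intro x hx
    have hmem := A_subset hA hDbE hDb hx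
    rcases Finset.mem_insert.mp hmem with h | h
    · exact h ▸ Finset.mem_insert_self _ _
    · rcases Finset.mem_insert.mp h with h' | h'
      · exact absurd (h' ▸ hx) hnotee
      · exact Finset.mem_insert_of_mem h'
  exact ⟨hDb, hnD₀, (A_eq_up hA hDeDb hDbE hDe hDb hsub).symm⟩

lemma A_both_mem (hA : GoodA E d w A) (hw : ∀ x ∈ E, 0 < w x)
    (e : V × V) (he : e ∈ E) (hee : drev e ∈ E) (hne : e ≠ drev e)
    {D₀ : Finset (V × V)} (hD₀ : D₀ ⊆ E) (heD₀ : e ∉ D₀) (heeD₀ : drev e ∉ D₀)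
    (hDe : AdmitsFlow E (insert e D₀) d) (hDee : AdmitsFlow E (insert (drev e) D₀) d)
    (hmem : e ∈ A (insert e D₀)) :
    AdmitsFlow E (insert e (insert (drev e) D₀)) d ∧ AdmitsFlow E D₀ d ∧
      A (insert e (insert (drev e) D₀)) = A (insert e D₀) ∧
      A D₀ = A (insert (drev e) D₀) := by
  have hDeE : insert e D₀ ⊆ E := Finset.insert_subset he hD₀
  have hDeeE : insert (drev e) D₀ ⊆ E := Finset.insert_subset hee hD₀
  have hDeDb : insert e D₀ ⊆ insert e (insert (drev e) D₀) :=
    Finset.insert_subset_insert _ (Finset.subset_insert _ _)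
  have hnotee : drev e ∉ A (insert (drev e) D₀) := fun hc =>
    not_both_use hA hw e he hee hne hD₀ heD₀ heeD₀ hDe hDee hmem hc
  have hsub : A (insert (drev e) D₀) ⊆ D₀ := by
    intro x hx
    have hm := A_subset hA hDeeE hDee hx
    rcases Finset.mem_insert.mp hm with h | h
    · exact absurd (h ▸ hx) hnotee
    · exact h
  have hflowD₀ : IsFlow E D₀ d (ind (A (insert (drev e) D₀))) := by
    refine (hA _ hDeeE hDee).1.1.restrict ?_
    intro x hx
    have : x ∉ A (insert (drev e) D₀) := fun hxA => hx (hsub hxA)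
    simp [ind, this]
  have hD₀a : AdmitsFlow E D₀ d := ⟨_, hflowD₀⟩
  have hAD₀ : A D₀ = A (insert (drev e) D₀) :=
    A_eq_up hA (Finset.subset_insert _ _) hDeeE hD₀a hDee hsub
  have hflowDe : IsFlow E (insert e D₀) d (ind (A (insert (drev e) D₀))) :=
    hflowD₀.mono (Finset.subset_insert _ _)
  have hle : flowCost E w (ind (A (insert e D₀)))
      ≤ flowCost E w (ind (A (insert (drev e) D₀))) :=
    (hA _ hDeE hDe).1.2 _ hflowDe
  exact ⟨hDe.mono hDeDb, hD₀a,
    A_both_eq hA hw e he hee hne hD₀ hDe hDee hle, hAD₀⟩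

lemma A_neither_mem (hA : GoodA E d w A) (hw : ∀ x ∈ E, 0 < w x)
    (e : V × V) (he : e ∈ E) (hee : drev e ∈ E) (hne : e ≠ drev e)
    {D₀ : Finset (V × V)} (hD₀ : D₀ ⊆ E) (heD₀ : e ∉ D₀) (heeD₀ : drev e ∉ D₀)
    (hDe : AdmitsFlow E (insert e D₀) d) (hDee : AdmitsFlow E (insert (drev e) D₀) d)
    (h1 : e ∉ A (insert e D₀)) (h2 : drev e ∉ A (insert (drev e) D₀)) :
    AdmitsFlow E (insert e (insert (drev e) D₀)) d ∧ AdmitsFlow E D₀ d ∧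
      A (insert e (insert (drev e) D₀)) = A (insert e D₀) ∧
      A D₀ = A (insert e D₀) ∧ A (insert e D₀) = A (insert (drev e) D₀) := by
  have hDeE : insert e D₀ ⊆ E := Finset.insert_subset he hD₀
  have hDeeE : insert (drev e) D₀ ⊆ E := Finset.insert_subset hee hD₀
  have hDeDb : insert e D₀ ⊆ insert e (insert (drev e) D₀) :=
    Finset.insert_subset_insert _ (Finset.subset_insert _ _)
  have hsub1 : A (insert e D₀) ⊆ D₀ := by
    intro x hx
    have hm := A_subset hA hDeE hDe hx
    rcases Finset.mem_insert.mp hm with h | h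
    · exact absurd (h ▸ hx) h1
    · exact h
  have hsub2 : A (insert (drev e) D₀) ⊆ D₀ := by
    intro x hx
    have hm := A_subset hA hDeeE hDee hx
    rcases Finset.mem_insert.mp hm with h | h
    · exact absurd (h ▸ hx) h2
    · exact h
  have hflowD₀ : IsFlow E D₀ d (ind (A (insert e D₀))) := by
    refine (hA _ hDeE hDe).1.1.restrict ?_
    intro x hx
    have : x ∉ A (insert e D₀) := fun hxA => hx (hsub1 hxA)
    simp [ind, this]
  have hD₀a : AdmitsFlow E D₀ d := ⟨_, hflowD₀⟩
  have hA1 : A D₀ = A (insert e D₀) :=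
    A_eq_up hA (Finset.subset_insert _ _) hDeE hD₀a hDe hsub1
  have hA2 : A D₀ = A (insert (drev e) D₀) :=
    A_eq_up hA (Finset.subset_insert _ _) hDeeE hD₀a hDee hsub2
  have hEq : A (insert e D₀) = A (insert (drev e) D₀) := hA1.symm.trans hA2
  have hle : flowCost E w (ind (A (insert e D₀)))
      ≤ flowCost E w (ind (A (insert (drev e) D₀))) := le_of_eq (by rw [hEq])
  exact ⟨hDe.mono hDeDb, hD₀a,
    A_both_eq hA hw e he hee hne hD₀ hDe hDee hle, hA1, hEq⟩

lemma ite_and_congr {p q r : Prop} (hp : p) (h : q ↔ r) :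
    (if p ∧ q then (1:ℕ) else 0) = if r then 1 else 0 := by
  by_cases hr : r
  · rw [if_pos ⟨hp, h.mpr hr⟩, if_pos hr]
  · rw [if_neg (fun hc => hr (h.mp hc.2)), if_neg hr]

lemma local_count (hA : GoodA E d w A) (hw : ∀ x ∈ E, 0 < w x)
    (e : V × V) (he : e ∈ E) (hee : drev e ∈ E) (hne : e ≠ drev e)
    {D₀ : Finset (V × V)} (hD₀ : D₀ ⊆ E) (heD₀ : e ∉ D₀) (heeD₀ : drev e ∉ D₀)
    (F : Finset (V × V)) :
    ((if AdmitsFlow E (insert e (insert (drev e) D₀)) d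
        ∧ A (insert e (insert (drev e) D₀)) = F then (1:ℕ) else 0)
      + (if AdmitsFlow E D₀ d ∧ A D₀ = F then (1:ℕ) else 0))
    = ((if AdmitsFlow E (insert e D₀) d ∧ A (insert e D₀) = F then (1:ℕ) else 0)
      + (if AdmitsFlow E (insert (drev e) D₀) d ∧ A (insert (drev e) D₀) = F
          then (1:ℕ) else 0)) := by
  have hcomm : insert (drev e) (insert e D₀) = insert e (insert (drev e) D₀) :=
    Finset.insert_comm _ _ _
  by_cases hDe : AdmitsFlow E (insert e D₀) d
  · by_cases hDee : AdmitsFlow E (insert (drev e) D₀) d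
    · by_cases hmeme : e ∈ A (insert e D₀)
      · obtain ⟨hDb, hD₀a, hEqb, hEq0⟩ :=
          A_both_mem hA hw e he hee hne hD₀ heD₀ heeD₀ hDe hDee hmeme
        simp only [hEqb, hEq0]
        by_cases hF1 : A (insert e D₀) = F <;> by_cases hF2 : A (insert (drev e) D₀) = F <;>
          simp [hDb, hD₀a, hDe, hDee, hF1, hF2]
      · by_cases hmemee : drev e ∈ A (insert (drev e) D₀)
        · obtain ⟨hDb, hD₀a, hEqb, hEq0⟩ :=
            A_both_mem hA hw (drev e) hee (by rw [drev_drev]; exact he)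
              (by rw [drev_drev]; exact fun hc => hne hc.symm) hD₀ heeD₀
              (by rw [drev_drev]; exact heD₀) hDee
              (by rw [drev_drev]; exact hDe) hmemee
          rw [drev_drev] at hEq0
          rw [drev_drev] at hDb hEqb
          rw [hcomm] at hDb hEqb
          simp only [hEqb, hEq0]
          by_cases hF1 : A (insert e D₀) = F <;>
            by_cases hF2 : A (insert (drev e) D₀) = F <;>
            simp [hDb, hD₀a, hDe, hDee, hF1, hF2]
        · obtain ⟨hDb, hD₀a, hEqb, hEq0, hEqDe⟩ :=
            A_neither_mem hA hw e he hee hne hD₀ heD₀ heeD₀ hDe hDee hmeme hmemee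
          simp only [hEqb, hEq0, ← hEqDe]
          by_cases hF1 : A (insert e D₀) = F <;>
            simp [hDb, hD₀a, hDe, hDee, hF1]
    · obtain ⟨hDb, hnD₀, hEqb⟩ := A_asym hA hw e he hee hne hD₀ heD₀ heeD₀ hDe hDee
      simp only [hEqb]
      by_cases hF1 : A (insert e D₀) = F <;> simp [hDb, hDe, hnD₀, hDee, hF1]
  · by_cases hDee : AdmitsFlow E (insert (drev e) D₀) d
    · obtain ⟨hDb, hnD₀, hEqb⟩ :=
        A_asym hA hw (drev e) hee (by rw [drev_drev]; exact he)
          (by rw [drev_drev]; exact fun hc => hne hc.symm) hD₀ heeD₀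
          (by rw [drev_drev]; exact heD₀) hDee (by rw [drev_drev]; exact hDe)
      rw [drev_drev] at hDb hEqb
      rw [hcomm] at hDb hEqb
      simp only [hEqb]
      by_cases hF2 : A (insert (drev e) D₀) = F <;> simp [hDb, hDee, hnD₀, hDe, hF2]
    · have hnDb : ¬ AdmitsFlow E (insert e (insert (drev e) D₀)) d := by
        intro h
        rcases admits_split e he hee hne h with h' | h'
        · exact hDe h'
        · exact hDee h'
      have hnD₀ : ¬ AdmitsFlow E D₀ d := fun h => hDe (h.mono (Finset.subset_insert _ _))
      simp [hnDb, hnD₀, hDe, hDee]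


end WithA

lemma drev_eq_iff {x y : V × V} : drev x = y ↔ x = drev y := by
  constructor
  · rintro rfl; exact (drev_drev x).symm
  · rintro rfl; exact drev_drev y

/-- `D` is oriented on the pairs in `T` and subgraph-like on the other pairs. -/
def MixedOn (E T D : Finset (V × V)) : Prop :=
  D ⊆ E ∧ ∀ x ∈ E, (x ∈ T → (x ∈ D ↔ drev x ∉ D)) ∧ (x ∉ T → (x ∈ D ↔ drev x ∈ D))

lemma mixedOn_empty (E D : Finset (V × V)) : MixedOn E ∅ D ↔ IsSubgraph E D := by
  unfold MixedOn IsSubgraph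
  constructor
  · rintro ⟨h1, h2⟩
    exact ⟨h1, fun x hx => (h2 x hx).2 (Finset.notMem_empty x)⟩
  · rintro ⟨h1, h2⟩
    exact ⟨h1, fun x hx => ⟨fun hc => absurd hc (Finset.notMem_empty x), fun _ => h2 x hx⟩⟩

lemma mixedOn_full (E D : Finset (V × V)) : MixedOn E E D ↔ IsOrientation E D := by
  unfold MixedOn IsOrientation
  constructor
  · rintro ⟨h1, h2⟩
    exact ⟨h1, fun x hx => (h2 x hx).1 hx⟩
  · rintro ⟨h1, h2⟩
    exact ⟨h1, fun x hx => ⟨fun _ => h2 x hx, fun hc => absurd hx hc⟩⟩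

lemma mixedOn_congr {E T₁ T₂ D₁ D₂ : Finset (V × V)} (hD₁ : D₁ ⊆ E) (hD₂ : D₂ ⊆ E)
    (h : ∀ x ∈ E,
      ((x ∈ T₁ → (x ∈ D₁ ↔ drev x ∉ D₁)) ∧ (x ∉ T₁ → (x ∈ D₁ ↔ drev x ∈ D₁)))
        ↔ ((x ∈ T₂ → (x ∈ D₂ ↔ drev x ∉ D₂)) ∧ (x ∉ T₂ → (x ∈ D₂ ↔ drev x ∈ D₂)))) :
    MixedOn E T₁ D₁ ↔ MixedOn E T₂ D₂ := by
  unfold MixedOn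
  constructor
  · rintro ⟨_, h2⟩; exact ⟨hD₂, fun x hx => (h x hx).mp (h2 x hx)⟩
  · rintro ⟨_, h2⟩; exact ⟨hD₁, fun x hx => (h x hx).mpr (h2 x hx)⟩

section Mixy

variable {E : Finset (V × V)}

lemma mixed_Db (T : Finset (V × V)) (e : V × V) (he : e ∈ E) (hee : drev e ∈ E)
    (hne : e ≠ drev e) (heT : e ∉ T) (heeT : drev e ∉ T)
    {D₀ : Finset (V × V)} (hD₀ : D₀ ⊆ E) (heD₀ : e ∉ D₀) (heeD₀ : drev e ∉ D₀) :
    MixedOn E T (insert e (insert (drev e) D₀)) ↔ MixedOn E T D₀ := by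
  refine mixedOn_congr (Finset.insert_subset he (Finset.insert_subset hee hD₀)) hD₀ ?_
  intro x hx
  by_cases hxe : x = e
  · subst hxe
    simp [Finset.mem_insert, heT, heD₀, heeD₀]
  · by_cases hxee : x = drev e
    · subst hxee
      simp [Finset.mem_insert, heeT, heD₀, heeD₀, drev_drev]
    · have hdxe : drev x ≠ e := fun h => hxee (drev_eq_iff.mp h)
      have hdxee : drev x ≠ drev e := fun h => hxe (by
        have := congrArg drev h
        rwa [drev_drev, drev_drev] at this)
      have h1 : x ∈ insert e (insert (drev e) D₀) ↔ x ∈ D₀ := by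
        simp [Finset.mem_insert, hxe, hxee]
      have h2 : drev x ∈ insert e (insert (drev e) D₀) ↔ drev x ∈ D₀ := by
        simp [Finset.mem_insert, hdxe, hdxee]
      rw [h1, h2]

lemma mixed_De (T : Finset (V × V)) (e : V × V) (he : e ∈ E) (hee : drev e ∈ E)
    (hne : e ≠ drev e) (heT : e ∉ T) (heeT : drev e ∉ T)
    {D₀ : Finset (V × V)} (hD₀ : D₀ ⊆ E) (heD₀ : e ∉ D₀) (heeD₀ : drev e ∉ D₀) :
    MixedOn E (insert e (insert (drev e) T)) (insert e D₀) ↔ MixedOn E T D₀ := by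
  refine mixedOn_congr (Finset.insert_subset he hD₀) hD₀ ?_
  intro x hx
  by_cases hxe : x = e
  · subst hxe
    simp [Finset.mem_insert, heT, heD₀, heeD₀, Ne.symm hne, drev_drev]
  · by_cases hxee : x = drev e
    · subst hxee
      simp [Finset.mem_insert, heeT, heD₀, heeD₀, hxe, drev_drev, hne]
    · have hdxe : drev x ≠ e := fun h => hxee (drev_eq_iff.mp h)
      have hdxee : drev x ≠ drev e := fun h => hxe (by
        have := congrArg drev h
        rwa [drev_drev, drev_drev] at this)
      have h1 : x ∈ insert e D₀ ↔ x ∈ D₀ := by simp [Finset.mem_insert, hxe]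
      have h2 : drev x ∈ insert e D₀ ↔ drev x ∈ D₀ := by simp [Finset.mem_insert, hdxe]
      have h3 : x ∈ insert e (insert (drev e) T) ↔ x ∈ T := by
        simp [Finset.mem_insert, hxe, hxee]
      rw [h1, h2, h3]

lemma mixed_Dee (T : Finset (V × V)) (e : V × V) (he : e ∈ E) (hee : drev e ∈ E)
    (hne : e ≠ drev e) (heT : e ∉ T) (heeT : drev e ∉ T)
    {D₀ : Finset (V × V)} (hD₀ : D₀ ⊆ E) (heD₀ : e ∉ D₀) (heeD₀ : drev e ∉ D₀) :
    MixedOn E (insert e (insert (drev e) T)) (insert (drev e) D₀) ↔ MixedOn E T D₀ := by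
  refine mixedOn_congr (Finset.insert_subset hee hD₀) hD₀ ?_
  intro x hx
  by_cases hxe : x = e
  · subst hxe
    simp [Finset.mem_insert, heT, heD₀, heeD₀, Ne.symm hne, hne, drev_drev]
  · by_cases hxee : x = drev e
    · subst hxee
      simp [Finset.mem_insert, heeT, heD₀, heeD₀, hxe, drev_drev, Ne.symm hne, hne]
    · have hdxe : drev x ≠ e := fun h => hxee (drev_eq_iff.mp h)
      have hdxee : drev x ≠ drev e := fun h => hxe (by
        have := congrArg drev h
        rwa [drev_drev, drev_drev] at this)
      have h1 : x ∈ insert (drev e) D₀ ↔ x ∈ D₀ := by simp [Finset.mem_insert, hxee]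
      have h2 : drev x ∈ insert (drev e) D₀ ↔ drev x ∈ D₀ := by
        simp [Finset.mem_insert, hdxee]
      have h3 : x ∈ insert e (insert (drev e) T) ↔ x ∈ T := by
        simp [Finset.mem_insert, hxe, hxee]
      rw [h1, h2, h3]

end Mixy

lemma card_filter_pair {α : Type*} [DecidableEq α] (p : α → Prop) [DecidablePred p] {a b : α}
    (hab : a ≠ b) : (Finset.filter p ({a, b} : Finset α)).card
      = (if p a then 1 else 0) + (if p b then 1 else 0) := by
  rw [Finset.filter_insert, Finset.filter_singleton]
  by_cases ha : p a <;> by_cases hb : p b <;>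
    simp [ha, hb, hab, Finset.card_insert_of_notMem]

section Steps

variable {E : Finset (V × V)} {d : V → ℤ} {w : V × V → ℝ}
variable {A : Finset (V × V) → Finset (V × V)}

lemma step_count (hA : GoodA E d w A) (hw : ∀ x ∈ E, 0 < w x) (F : Finset (V × V))
    (T : Finset (V × V)) (e : V × V) (he : e ∈ E) (hee : drev e ∈ E) (hne : e ≠ drev e)
    (heT : e ∉ T) (heeT : drev e ∉ T) :
    (Finset.filter (fun D => MixedOn E T D ∧ AdmitsFlow E D d ∧ A D = F) E.powerset).card
      = (Finset.filter (fun D => MixedOn E (insert e (insert (drev e) T)) D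
          ∧ AdmitsFlow E D d ∧ A D = F) E.powerset).card := by
  have hmap1 : ∀ D ∈ Finset.filter
      (fun D => MixedOn E T D ∧ AdmitsFlow E D d ∧ A D = F) E.powerset,
      D \ ({e, drev e} : Finset (V × V)) ∈ (E \ ({e, drev e} : Finset (V × V))).powerset := by
    intro D hD
    rw [Finset.mem_powerset]
    exact Finset.sdiff_subset_sdiff
      (Finset.mem_powerset.mp (Finset.mem_filter.mp hD).1) (le_refl _)
  have hmap2 : ∀ D ∈ Finset.filter
      (fun D => MixedOn E (insert e (insert (drev e) T)) D
        ∧ AdmitsFlow E D d ∧ A D = F) E.powerset,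
      D \ ({e, drev e} : Finset (V × V)) ∈ (E \ ({e, drev e} : Finset (V × V))).powerset := by
    intro D hD
    rw [Finset.mem_powerset]
    exact Finset.sdiff_subset_sdiff
      (Finset.mem_powerset.mp (Finset.mem_filter.mp hD).1) (le_refl _)
  rw [Finset.card_eq_sum_card_fiberwise hmap1, Finset.card_eq_sum_card_fiberwise hmap2]
  refine Finset.sum_congr rfl ?_
  intro D₀ hD₀mem
  rw [Finset.mem_powerset] at hD₀mem
  have hD₀E : D₀ ⊆ E := fun x hx => (Finset.mem_sdiff.mp (hD₀mem hx)).1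
  have heD₀ : e ∉ D₀ := fun hx => (Finset.mem_sdiff.mp (hD₀mem hx)).2 (by simp)
  have heeD₀ : drev e ∉ D₀ := fun hx => (Finset.mem_sdiff.mp (hD₀mem hx)).2 (by simp)
  have hD₀fib : D₀ \ ({e, drev e} : Finset (V × V)) = D₀ := by
    ext x
    simp only [Finset.mem_sdiff, Finset.mem_insert, Finset.mem_singleton]
    constructor
    · exact fun h => h.1
    · intro hx
      refine ⟨hx, ?_⟩
      rintro (rfl | rfl)
      · exact heD₀ hx
      · exact heeD₀ hx
  have hDbfib : (insert e (insert (drev e) D₀)) \ ({e, drev e} : Finset (V × V)) = D₀ := by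
    ext x
    simp only [Finset.mem_sdiff, Finset.mem_insert, Finset.mem_singleton]
    constructor
    · rintro ⟨(rfl | rfl | hx), hn⟩
      · exact absurd (Or.inl rfl) hn
      · exact absurd (Or.inr rfl) hn
      · exact hx
    · intro hx
      refine ⟨Or.inr (Or.inr hx), ?_⟩
      rintro (rfl | rfl)
      · exact heD₀ hx
      · exact heeD₀ hx
  have hDefib : (insert e D₀) \ ({e, drev e} : Finset (V × V)) = D₀ := by
    ext x
    simp only [Finset.mem_sdiff, Finset.mem_insert, Finset.mem_singleton]
    constructor
    · rintro ⟨(rfl | hx), hn⟩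
      · exact absurd (Or.inl rfl) hn
      · exact hx
    · intro hx
      refine ⟨Or.inr hx, ?_⟩
      rintro (rfl | rfl)
      · exact heD₀ hx
      · exact heeD₀ hx
  have hDeefib : (insert (drev e) D₀) \ ({e, drev e} : Finset (V × V)) = D₀ := by
    ext x
    simp only [Finset.mem_sdiff, Finset.mem_insert, Finset.mem_singleton]
    constructor
    · rintro ⟨(rfl | hx), hn⟩
      · exact absurd (Or.inr rfl) hn
      · exact hx
    · intro hx
      refine ⟨Or.inr hx, ?_⟩
      rintro (rfl | rfl)
      · exact heD₀ hx
      · exact heeD₀ hx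
  have hfib1 : Finset.filter (fun D => D \ ({e, drev e} : Finset (V × V)) = D₀)
        (Finset.filter (fun D => MixedOn E T D ∧ AdmitsFlow E D d ∧ A D = F) E.powerset)
      = Finset.filter (fun D => MixedOn E T D ∧ AdmitsFlow E D d ∧ A D = F)
          ({D₀, insert e (insert (drev e) D₀)} : Finset (Finset (V × V))) := by
    ext D
    simp only [Finset.mem_filter, Finset.mem_powerset, Finset.mem_insert,
      Finset.mem_singleton]
    constructor
    · rintro ⟨⟨hDE, hP⟩, hfib⟩
      refine ⟨?_, hP⟩
      by_cases heD : e ∈ D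
      · have heeD : drev e ∈ D := ((hP.1.2 e he).2 heT).mp heD
        right
        ext x
        by_cases hxe : x = e
        · subst hxe; simp [heD, Finset.mem_insert]
        · by_cases hxee : x = drev e
          · subst hxee; simp [heeD, Finset.mem_insert]
          · have hxiff : x ∈ D ↔ x ∈ D₀ := by
              rw [← hfib]; simp [Finset.mem_sdiff, hxe, hxee]
            simp [Finset.mem_insert, hxe, hxee, hxiff]
      · have heeD : drev e ∉ D := fun hc => heD (((hP.1.2 e he).2 heT).mpr hc)
        left
        ext x
        by_cases hxe : x = e
        · subst hxe; simp [heD, heD₀]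
        · by_cases hxee : x = drev e
          · subst hxee; simp [heeD, heeD₀]
          · rw [← hfib]; simp [Finset.mem_sdiff, hxe, hxee]
    · rintro ⟨hD, hP⟩
      rcases hD with rfl | rfl
      · exact ⟨⟨hD₀E, hP⟩, hD₀fib⟩
      · exact ⟨⟨Finset.insert_subset he (Finset.insert_subset hee hD₀E), hP⟩, hDbfib⟩
  have hfib2 : Finset.filter (fun D => D \ ({e, drev e} : Finset (V × V)) = D₀)
        (Finset.filter (fun D => MixedOn E (insert e (insert (drev e) T)) D
          ∧ AdmitsFlow E D d ∧ A D = F) E.powerset)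
      = Finset.filter (fun D => MixedOn E (insert e (insert (drev e) T)) D
          ∧ AdmitsFlow E D d ∧ A D = F)
          ({insert e D₀, insert (drev e) D₀} : Finset (Finset (V × V))) := by
    ext D
    simp only [Finset.mem_filter, Finset.mem_powerset, Finset.mem_insert,
      Finset.mem_singleton]
    constructor
    · rintro ⟨⟨hDE, hP⟩, hfib⟩
      refine ⟨?_, hP⟩
      have heT' : e ∈ insert e (insert (drev e) T) := Finset.mem_insert_self _ _
      by_cases heD : e ∈ D
      · have heeD : drev e ∉ D := ((hP.1.2 e he).1 heT').mp heD
        left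
        ext x
        by_cases hxe : x = e
        · subst hxe; simp [heD, Finset.mem_insert]
        · by_cases hxee : x = drev e
          · subst hxee; simp [heeD, heeD₀, Finset.mem_insert, Ne.symm hne]
          · have hxiff : x ∈ D ↔ x ∈ D₀ := by
              rw [← hfib]; simp [Finset.mem_sdiff, hxe, hxee]
            simp [Finset.mem_insert, hxe, hxee, hxiff]
      · have heeD : drev e ∈ D := by
          by_contra hc
          exact heD (((hP.1.2 e he).1 heT').mpr hc)
        right
        ext x
        by_cases hxe : x = e
        · subst hxe; simp [heD, heD₀, Finset.mem_insert, hne]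
        · by_cases hxee : x = drev e
          · subst hxee; simp [heeD, Finset.mem_insert]
          · have hxiff : x ∈ D ↔ x ∈ D₀ := by
              rw [← hfib]; simp [Finset.mem_sdiff, hxe, hxee]
            simp [Finset.mem_insert, hxe, hxee, hxiff]
    · rintro ⟨hD, hP⟩
      rcases hD with rfl | rfl
      · exact ⟨⟨Finset.insert_subset he hD₀E, hP⟩, hDefib⟩
      · exact ⟨⟨Finset.insert_subset hee hD₀E, hP⟩, hDeefib⟩
  rw [hfib1, hfib2]
  have hne1 : D₀ ≠ insert e (insert (drev e) D₀) := by
    intro h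
    exact heD₀ (h ▸ Finset.mem_insert_self e (insert (drev e) D₀))
  have hne2 : insert e D₀ ≠ insert (drev e) D₀ := by
    intro h
    have : e ∈ insert (drev e) D₀ := h ▸ Finset.mem_insert_self e D₀
    rcases Finset.mem_insert.mp this with h' | h'
    · exact hne h'
    · exact heD₀ h'
  rw [card_filter_pair _ hne1, card_filter_pair _ hne2]
  have hmixDb := mixed_Db T e he hee hne heT heeT hD₀E heD₀ heeD₀
  have hmixDe := mixed_De T e he hee hne heT heeT hD₀E heD₀ heeD₀
  have hmixDee := mixed_Dee T e he hee hne heT heeT hD₀E heD₀ heeD₀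
  by_cases hW : MixedOn E T D₀
  · have hWb := hmixDb.mpr hW
    have hWe := hmixDe.mpr hW
    have hWee := hmixDee.mpr hW
    have hloc := local_count hA hw e he hee hne hD₀E heD₀ heeD₀ F
    simp only [hW, hWb, hWe, hWee, true_and]
    rw [Nat.add_comm]
    exact hloc
  · have hWb : ¬ MixedOn E T (insert e (insert (drev e) D₀)) := fun hc => hW (hmixDb.mp hc)
    have hWe : ¬ MixedOn E (insert e (insert (drev e) T)) (insert e D₀) :=
      fun hc => hW (hmixDe.mp hc)
    have hWee : ¬ MixedOn E (insert e (insert (drev e) T)) (insert (drev e) D₀) :=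
      fun hc => hW (hmixDee.mp hc)
    simp [hW, hWb, hWe, hWee]

lemma count_up (hE_symm : ∀ x : V × V, x ∈ E ↔ drev x ∈ E)
    (hE_ne : ∀ x ∈ E, (x : V × V).1 ≠ x.2)
    (hA : GoodA E d w A) (hw : ∀ x ∈ E, 0 < w x) (F : Finset (V × V)) :
    ∀ n (T : Finset (V × V)), (E \ T).card ≤ n → T ⊆ E → (∀ x ∈ T, drev x ∈ T) →
      (Finset.filter (fun D => MixedOn E T D ∧ AdmitsFlow E D d ∧ A D = F)
        E.powerset).card
        = (Finset.filter (fun D => MixedOn E E D ∧ AdmitsFlow E D d ∧ A D = F)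
          E.powerset).card := by
  intro n
  induction n with
  | zero =>
    intro T hcard hTE _
    have hempty : E \ T = ∅ := Finset.card_eq_zero.mp (Nat.le_zero.mp hcard)
    have hTeq : T = E := by
      refine Finset.Subset.antisymm hTE (fun x hx => ?_)
      by_contra hxT
      have : x ∈ E \ T := Finset.mem_sdiff.mpr ⟨hx, hxT⟩
      simp [hempty] at this
    rw [hTeq]
  | succ n ih =>
    intro T hcard hTE hTsym
    by_cases hTeq : T = E
    · rw [hTeq]
    · have hex : ∃ x, x ∈ E \ T := by
        by_contra h
        push_neg at h
        refine hTeq (Finset.Subset.antisymm hTE (fun x hx => ?_))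
        by_contra hxT
        exact h x (Finset.mem_sdiff.mpr ⟨hx, hxT⟩)
      obtain ⟨e, heET⟩ := hex
      have he : e ∈ E := (Finset.mem_sdiff.mp heET).1
      have heT : e ∉ T := (Finset.mem_sdiff.mp heET).2
      have hee : drev e ∈ E := (hE_symm e).mp he
      have hne : e ≠ drev e := ne_drev (hE_ne e he)
      have heeT : drev e ∉ T := fun hc => heT (by
        have := hTsym _ hc
        rwa [drev_drev] at this)
      rw [step_count hA hw F T e he hee hne heT heeT]
      refine ih (insert e (insert (drev e) T)) ?_
        (Finset.insert_subset he (Finset.insert_subset hee hTE)) ?_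
      · have hsub : E \ insert e (insert (drev e) T) ⊆ (E \ T).erase e := by
          intro x hx
          rw [Finset.mem_erase]
          have hxm := Finset.mem_sdiff.mp hx
          refine ⟨?_, Finset.mem_sdiff.mpr ⟨hxm.1, fun hc =>
            hxm.2 (Finset.mem_insert_of_mem (Finset.mem_insert_of_mem hc))⟩⟩
          intro hc
          exact hxm.2 (hc ▸ Finset.mem_insert_self _ _)
        have h1 := Finset.card_le_card hsub
        have h2 := Finset.card_erase_of_mem heET
        have h3 : 1 ≤ (E \ T).card := Finset.card_pos.mpr ⟨e, heET⟩
        omega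
      · intro x hx
        rcases Finset.mem_insert.mp hx with rfl | hx'
        · exact Finset.mem_insert_of_mem (Finset.mem_insert_self _ _)
        · rcases Finset.mem_insert.mp hx' with rfl | hx''
          · rw [drev_drev]; exact Finset.mem_insert_self _ _
          · exact Finset.mem_insert_of_mem (Finset.mem_insert_of_mem (hTsym _ hx''))

end Steps

end Aux

theorem card_subgraphs_eq_card_orientations_with_given_min_cost_flow
    {V : Type*} [Fintype V] [DecidableEq V]
    (E : Finset (V × V)) (hE_symm : ∀ e, e ∈ E ↔ drev e ∈ E)
    (hE_ne : ∀ e ∈ E, e.1 ≠ e.2)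
    (d : V → ℤ) (hd : ∑ u : V, d u = 0)
    (w : V × V → ℝ) (hw : ∀ e ∈ E, 0 < w e)
    (A : Finset (V × V) → Finset (V × V)) (hA : GoodA E d w A)
    (F : Finset (V × V)) (hF : F ⊆ E) :
    {K : Finset (V × V) | IsSubgraph E K ∧ AdmitsFlow E K d ∧ A K = F}.ncard =
      {L : Finset (V × V) | IsOrientation E L ∧ AdmitsFlow E L d ∧ A L = F}.ncard := by
  classical
  have hset1 : {K : Finset (V × V) | IsSubgraph E K ∧ AdmitsFlow E K d ∧ A K = F}
      = ↑(Finset.filter (fun D => MixedOn E (∅ : Finset (V × V)) D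
          ∧ AdmitsFlow E D d ∧ A D = F) E.powerset) := by
    ext K
    simp only [Set.mem_setOf_eq, Finset.mem_coe, Finset.mem_filter, Finset.mem_powerset]
    constructor
    · rintro ⟨h1, h2, h3⟩
      exact ⟨h1.1, (mixedOn_empty E K).mpr h1, h2, h3⟩
    · rintro ⟨hKE, hm, h2, h3⟩
      exact ⟨(mixedOn_empty E K).mp hm, h2, h3⟩
  have hset2 : {L : Finset (V × V) | IsOrientation E L ∧ AdmitsFlow E L d ∧ A L = F}
      = ↑(Finset.filter (fun D => MixedOn E E D ∧ AdmitsFlow E D d ∧ A D = F)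
          E.powerset) := by
    ext L
    simp only [Set.mem_setOf_eq, Finset.mem_coe, Finset.mem_filter, Finset.mem_powerset]
    constructor
    · rintro ⟨h1, h2, h3⟩
      exact ⟨h1.1, (mixedOn_full E L).mpr h1, h2, h3⟩
    · rintro ⟨hKE, hm, h2, h3⟩
      exact ⟨(mixedOn_full E L).mp hm, h2, h3⟩
  rw [hset1, hset2, Set.ncard_coe_finset, Set.ncard_coe_finset]
  exact count_up hE_symm hE_ne hA hw F (E \ ∅).card ∅ (le_refl _) (Finset.empty_subset E)
    (fun x hx => absurd hx (Finset.notMem_empty x))
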